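/- 2^⌊n/2⌋ divides det(W). -/

import Mathlib

open Matrix

section Aux

open Module Submodule LinearMap Finset

variable {n : ℕ}

lemma iso1 (B : Matrix (Fin n) (Fin n) (ZMod 2)) (hs : Bᵀ = B) (hd : ∀ i, B i i = 0)
    (x : Fin n → ZMod 2) : x ⬝ᵥ (B *ᵥ x) = 0 := by
  have : x ⬝ᵥ (B *ᵥ x) = ∑ p ∈ Finset.univ ×ˢ Finset.univ,
      x p.1 * (B p.1 p.2 * x p.2) := by
    rw [Finset.sum_product]
    simp [dotProduct, Matrix.mulVec, Finset.mul_sum]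
  rw [this]
  refine Finset.sum_involution (fun p _ => (p.2, p.1)) ?_ ?_ (by simp) (by simp)
  · intro p _
    have hB : B p.2 p.1 = B p.1 p.2 := by conv_rhs => rw [← hs, Matrix.transpose_apply]
    rw [hB]
    have h2 : (2 : ZMod 2) = 0 := rfl
    ring_nf
    rw [h2, mul_zero]
  · intro p _ hne
    rcases p with ⟨i, j⟩
    rintro h
    simp only [Prod.mk.injEq] at h
    rcases h with ⟨h1, h2⟩
    subst h1
    simp [hd] at hne

lemma dotself (y : Fin n → ZMod 2) : y ⬝ᵥ y = (fun _ => (1:ZMod 2)) ⬝ᵥ y := by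
  simp only [dotProduct]
  refine Finset.sum_congr rfl fun i _ => ?_
  have : ∀ a : ZMod 2, a * a = 1 * a := by decide
  exact this (y i)

lemma dot_pow (B : Matrix (Fin n) (Fin n) (ZMod 2)) (hs : Bᵀ = B)
    (u : Fin n → ZMod 2) (k : ℕ) (z : Fin n → ZMod 2) :
    u ⬝ᵥ ((B ^ k) *ᵥ z) = ((B ^ k) *ᵥ u) ⬝ᵥ z := by
  have h : (B ^ k)ᵀ = B ^ k := by rw [Matrix.transpose_pow, hs]
  rw [Matrix.dotProduct_mulVec]
  conv_lhs => rw [← h]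
  rw [Matrix.vecMul_transpose]

lemma a_zero (B : Matrix (Fin n) (Fin n) (ZMod 2)) (hs : Bᵀ = B) (hd : ∀ i, B i i = 0) :
    ∀ m, 1 ≤ m → (fun _ => (1:ZMod 2)) ⬝ᵥ ((B ^ m) *ᵥ (fun _ => (1:ZMod 2))) = 0 := by
  intro m
  induction m using Nat.strong_induction_on with
  | _ m ih =>
    intro hm
    rcases Nat.even_or_odd m with ⟨k, hk⟩ | ⟨k, hk⟩
    · -- m = 2k, k ≥ 1
      have hk1 : 1 ≤ k := by omega
      have : B ^ m = B ^ k * B ^ k := by rw [hk, pow_add]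
      rw [this, ← Matrix.mulVec_mulVec, dot_pow B hs]
      set y := (B ^ k) *ᵥ (fun _ => (1:ZMod 2))
      rw [dotself y]
      exact ih k (by omega) hk1
    · -- m = 2k+1
      have : B ^ m = B ^ k * B * B ^ k := by
        rw [mul_assoc, ← pow_succ', ← pow_add]; congr 1; omega
      rw [this, ← Matrix.mulVec_mulVec, ← Matrix.mulVec_mulVec, dot_pow B hs]
      exact iso1 B hs hd _

open Module Submodule LinearMap in
lemma ker_bound (hn : 0 < n) (B : Matrix (Fin n) (Fin n) (ZMod 2))
    (hs : Bᵀ = B) (hd : ∀ i, B i i = 0) :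
    n / 2 ≤ finrank (ZMod 2)
      (LinearMap.ker (Matrix.mulVecLin
        (Matrix.of fun i j : Fin n => ((B ^ (j:ℕ)) *ᵥ (fun _ => (1:ZMod 2))) i))) := by
  set e1 : Fin n → ZMod 2 := fun _ => 1 with he1
  set v : ℕ → Fin n → ZMod 2 := fun m => (B ^ m) *ᵥ e1 with hv
  set W₂ : Matrix (Fin n) (Fin n) (ZMod 2) := Matrix.of fun i j : Fin n => v (j:ℕ) i with hW₂
  have hcolT : ∀ j : Fin n, W₂ᵀ j = v (j:ℕ) := fun j => funext fun i => rfl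
  have hdot : ∀ i j : ℕ, 1 ≤ i + j → v i ⬝ᵥ v j = 0 := by
    intro i j h
    have h1 : e1 ⬝ᵥ ((B ^ (i + j)) *ᵥ e1) = v i ⬝ᵥ v j := by
      rw [pow_add, ← Matrix.mulVec_mulVec, dot_pow B hs]
    rw [← h1]
    exact a_zero B hs hd _ h
  -- Up inside kernel of transpose
  set Up : Submodule (ZMod 2) (Fin n → ZMod 2) :=
    span (ZMod 2) (Set.range fun t : Fin (n-1) => v ((t:ℕ)+1)) with hUp
  have h1 : Up ≤ LinearMap.ker (Matrix.mulVecLin W₂ᵀ) := by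
    rw [hUp, span_le]
    rintro x ⟨t, rfl⟩
    simp only [SetLike.mem_coe, LinearMap.mem_ker, Matrix.mulVecLin_apply]
    funext j
    show W₂ᵀ j ⬝ᵥ v ((t:ℕ)+1) = 0
    rw [hcolT]
    exact hdot _ _ (by omega)
  -- rank facts
  have hrange : Set.range W₂ᵀ = Set.range (fun j : Fin n => v (j:ℕ)) := by
    ext x; constructor
    · rintro ⟨j, rfl⟩; exact ⟨j, (hcolT j).symm⟩
    · rintro ⟨j, rfl⟩; exact ⟨j, hcolT j⟩
  have hrank : W₂.rank = finrank (ZMod 2) (span (ZMod 2) (Set.range fun j : Fin n => v (j:ℕ))) := by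
    rw [Matrix.rank_eq_finrank_span_cols, show Set.range W₂.col = Set.range W₂ᵀ from rfl, hrange]
  -- finrank Up ≤ n - rank
  have h2 : finrank (ZMod 2) (LinearMap.ker (Matrix.mulVecLin W₂ᵀ)) + W₂.rank = n := by
    have := LinearMap.finrank_range_add_finrank_ker (Matrix.mulVecLin W₂ᵀ)
    rw [add_comm] at this
    have hT : W₂ᵀ.rank = W₂.rank := Matrix.rank_transpose W₂
    rw [show finrank (ZMod 2) (LinearMap.range (Matrix.mulVecLin W₂ᵀ)) = W₂ᵀ.rank from rfl, hT]
      at this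
    simpa using this
  have hUp : finrank (ZMod 2) Up ≤ finrank (ZMod 2) (LinearMap.ker (Matrix.mulVecLin W₂ᵀ)) :=
    Submodule.finrank_mono h1
  -- span of all columns ≤ span v0 ⊔ Up
  have h3 : span (ZMod 2) (Set.range fun j : Fin n => v (j:ℕ)) ≤ (span (ZMod 2) {v 0}) ⊔ Up := by
    rw [span_le]
    rintro x ⟨j, rfl⟩
    show v (j:ℕ) ∈ (span (ZMod 2) {v 0} ⊔ Up : Submodule (ZMod 2) (Fin n → ZMod 2))
    rcases Nat.eq_zero_or_pos (j:ℕ) with h0 | h0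
    · rw [h0]
      exact Submodule.mem_sup_left (subset_span rfl)
    · refine Submodule.mem_sup_right ?_
      have ht : (j:ℕ) - 1 < n - 1 := by omega
      have heq : ((⟨(j:ℕ)-1, ht⟩ : Fin (n-1)):ℕ) + 1 = (j:ℕ) := by
        simp only [Fin.val_mk]; omega
      rw [← heq]
      exact subset_span ⟨_, rfl⟩
  have h4 : W₂.rank ≤ 1 + finrank (ZMod 2) Up := by
    rw [hrank]
    calc finrank (ZMod 2) (span (ZMod 2) (Set.range fun j : Fin n => v (j:ℕ)))
        ≤ finrank (ZMod 2) ↥((span (ZMod 2) {v 0} : Submodule (ZMod 2) (Fin n → ZMod 2)) ⊔ Up) := Submodule.finrank_mono h3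
      _ ≤ finrank (ZMod 2) (span (ZMod 2) {v 0}) + finrank (ZMod 2) Up := by
          have := Submodule.finrank_sup_add_finrank_inf_eq (span (ZMod 2) {v 0}) Up
          omega
      _ ≤ 1 + finrank (ZMod 2) Up := by
          have : finrank (ZMod 2) (span (ZMod 2) {v 0}) ≤ 1 := by
            simpa using finrank_span_le_card ({v 0} : Set (Fin n → ZMod 2))
          omega
  -- kernel of W₂ itself
  have h5 : finrank (ZMod 2) (LinearMap.ker (Matrix.mulVecLin W₂)) + W₂.rank = n := by
    have := LinearMap.finrank_range_add_finrank_ker (Matrix.mulVecLin W₂)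
    rw [add_comm] at this
    rw [show finrank (ZMod 2) (LinearMap.range (Matrix.mulVecLin W₂)) = W₂.rank from rfl] at this
    simpa using this
  omega

open Module Submodule LinearMap in
lemma det_dvd_of_ker (W : Matrix (Fin n) (Fin n) ℤ) (k : ℕ) (hkn : k ≤ n)
    (hk : k ≤ finrank (ZMod 2)
      (LinearMap.ker (Matrix.mulVecLin (W.map (Int.cast : ℤ → ZMod 2))))) :
    (2:ℤ) ^ k ∣ W.det := by
  classical
  set W₂ : Matrix (Fin n) (Fin n) (ZMod 2) := W.map (Int.cast : ℤ → ZMod 2) with hW₂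
  set K := LinearMap.ker (Matrix.mulVecLin W₂) with hK
  -- a basis of Fin n → ZMod 2 whose first k vectors lie in K
  obtain ⟨C, hC⟩ := Submodule.exists_isCompl K
  have hdim : finrank (ZMod 2) K + finrank (ZMod 2) C = n := by
    have := Submodule.finrank_add_eq_of_isCompl hC
    simpa [Module.finrank_pi] using this
  set d := finrank (ZMod 2) K with hd
  have hCd : finrank (ZMod 2) C = n - d := by omega
  let bK : Basis (Fin d) (ZMod 2) K := Module.finBasis (ZMod 2) K
  let bC : Basis (Fin (n - d)) (ZMod 2) C := Module.finBasisOfFinrankEq (ZMod 2) C hCd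
  have hsum : d + (n - d) = n := by omega
  let b : Basis (Fin n) (ZMod 2) (Fin n → ZMod 2) :=
    ((bK.prod bC).map (Submodule.prodEquivOfIsCompl K C hC)).reindex
      ((finSumFinEquiv).trans (finCongr hsum))
  have hbK : ∀ j : Fin n, (j:ℕ) < d → b j ∈ K := by
    intro j hj
    have he : ((finSumFinEquiv (n := n - d)).trans (finCongr hsum)).symm j
        = Sum.inl (⟨(j:ℕ), hj⟩ : Fin d) := by
      rw [Equiv.symm_trans_apply]
      have : (finCongr hsum).symm j = Fin.castAdd (n - d) ⟨(j:ℕ), hj⟩ := by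
        ext; simp
      rw [this, finSumFinEquiv_symm_apply_castAdd]
    rw [Basis.reindex_apply, he, Basis.map_apply]
    have hpr : (bK.prod bC) (Sum.inl ⟨(j:ℕ), hj⟩)
        = ((bK ⟨(j:ℕ), hj⟩ : K), (0 : C)) :=
      Prod.ext (Basis.prod_apply_inl_fst _ _ _) (Basis.prod_apply_inl_snd _ _ _)
    rw [hpr]
    rw [Submodule.coe_prodEquivOfIsCompl']
    simp only [ZeroMemClass.coe_zero, add_zero]
    exact (bK _).2
  -- the change-of-basis matrix over ZMod 2 and its integer lift
  set P : Matrix (Fin n) (Fin n) (ZMod 2) := Matrix.of fun i j => b j i with hP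
  have hPdet : P.det ≠ 0 := by
    have h1 : P = (Pi.basisFun (ZMod 2) (Fin n)).toMatrix b := by
      ext i j
      rw [Basis.toMatrix_apply, Pi.basisFun_repr]
      rfl
    have h2 := (Pi.basisFun (ZMod 2) (Fin n)).isUnit_det b
    rw [Basis.det_apply, ← h1] at h2
    exact h2.ne_zero
  set Pt : Matrix (Fin n) (Fin n) ℤ := Matrix.of fun i j => ((P i j).val : ℤ) with hPt
  have hPmap : Pt.map (Int.cast : ℤ → ZMod 2) = P := by
    ext i j
    simp [hPt, Matrix.map_apply, ZMod.natCast_val, ZMod.intCast_cast, ZMod.cast_id]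
  have hcast : ((Pt.det : ℤ) : ZMod 2) = P.det := by
    have h0 : ((Pt.det : ℤ) : ZMod 2) = (Pt.map (Int.cast : ℤ → ZMod 2)).det :=
      RingHom.map_det (Int.castRingHom (ZMod 2)) Pt
    rw [h0, hPmap]
  have hPodd : ¬ ((2:ℤ) ∣ Pt.det) := by
    intro hdvd
    apply hPdet
    rw [← hcast, ZMod.intCast_zmod_eq_zero_iff_dvd]
    exact_mod_cast hdvd
  -- the product W * Pt has its first k columns even
  set M : Matrix (Fin n) (Fin n) ℤ := W * Pt with hM
  have hMeven : ∀ i j : Fin n, (j:ℕ) < k → (2:ℤ) ∣ M i j := by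
    intro i j hj
    have hmem : b j ∈ K := hbK j (by omega)
    have hz : W₂ *ᵥ (fun l => P l j) = 0 := by
      have : (fun l => P l j) = b j := rfl
      rw [this]
      simpa [Matrix.mulVecLin_apply] using (LinearMap.mem_ker.mp hmem)
    have : ((M i j : ℤ) : ZMod 2) = 0 := by
      have hmap : M.map (Int.cast : ℤ → ZMod 2) = W₂ * P := by
        rw [hM, ← hPmap, hW₂]
        exact Matrix.map_mul (f := Int.castRingHom (ZMod 2))
      have h1 : ((M i j : ℤ) : ZMod 2) = (W₂ * P) i j := by
        rw [← hmap]; rfl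
      rw [h1, Matrix.mul_apply]
      have := congrFun hz i
      simpa [Matrix.mulVec, dotProduct, Matrix.mul_apply] using this
    rwa [ZMod.intCast_zmod_eq_zero_iff_dvd] at this
  -- factor out 2 from the first k columns
  set V : Matrix (Fin n) (Fin n) ℤ :=
    Matrix.of fun i j => if (j:ℕ) < k then M i j / 2 else M i j with hV
  set D : Matrix (Fin n) (Fin n) ℤ :=
    Matrix.diagonal (fun j => if (j:ℕ) < k then 2 else 1) with hD
  have hMVD : M = V * D := by
    ext i j
    rw [Matrix.mul_diagonal]
    by_cases hj : (j:ℕ) < k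
    · simp only [hV, hD, Matrix.of_apply, hj, if_pos]
      exact (Int.ediv_mul_cancel (hMeven i j hj)).symm
    · simp [hV, hD, hj]
  have hDdet : D.det = 2 ^ k := by
    rw [hD, Matrix.det_diagonal]
    have hfil : Finset.univ.filter (fun j : Fin n => (j:ℕ) < k)
        = Finset.image (Fin.castLE hkn) Finset.univ := by
      ext j
      simp only [Finset.mem_filter, Finset.mem_univ, true_and, Finset.mem_image]
      constructor
      · intro hj
        exact ⟨⟨(j:ℕ), hj⟩, by ext; simp⟩
      · rintro ⟨t, rfl⟩
        simp
    rw [Finset.prod_ite, Finset.prod_const, Finset.prod_const, one_pow, mul_one, hfil,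
      Finset.card_image_of_injective _ (Fin.castLE_injective hkn), Finset.card_univ,
      Fintype.card_fin]
  have hdetM : W.det * Pt.det = V.det * 2 ^ k := by
    rw [← Matrix.det_mul, ← hM, hMVD, Matrix.det_mul, hDdet]
  have hdvd : (2:ℤ) ^ k ∣ W.det * Pt.det := ⟨V.det, by linarith [hdetM]⟩
  exact (Int.prime_two).pow_dvd_of_dvd_mul_right k hPodd hdvd


end Aux

/-- `2^⌊n/2⌋` divides `det W`. -/
theorem stmt_9 (n : ℕ) (hn : 0 < n)
    (A : Matrix (Fin n) (Fin n) ℤ)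
    (hA_symm : Aᵀ = A)
    (hA_diag : ∀ i, A i i = 0)
    (hA_01 : ∀ i j, A i j = 0 ∨ A i j = 1)
    (W : Matrix (Fin n) (Fin n) ℤ)
    (hW : W = Matrix.of fun (i j : Fin n) => (A ^ (j : ℕ)).mulVec (fun _ => (1 : ℤ)) i) :
    (2 : ℤ) ^ (n / 2) ∣ W.det := by
  set B : Matrix (Fin n) (Fin n) (ZMod 2) := A.map (Int.cast : ℤ → ZMod 2) with hB
  have hBs : Bᵀ = B := by
    rw [hB, ← Matrix.transpose_map, hA_symm]
  have hBd : ∀ i, B i i = 0 := by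
    intro i; simp [hB, Matrix.map_apply, hA_diag]
  have hWmap : W.map (Int.cast : ℤ → ZMod 2)
      = Matrix.of fun i j : Fin n => ((B ^ (j:ℕ)) *ᵥ (fun _ => (1:ZMod 2))) i := by
    ext i j
    simp only [hW, Matrix.map_apply, Matrix.of_apply]
    have hp : (A ^ (j:ℕ)).map (Int.cast : ℤ → ZMod 2) = B ^ (j:ℕ) := by
      have := map_pow ((Int.castRingHom (ZMod 2)).mapMatrix) A (j:ℕ)
      simpa [RingHom.mapMatrix_apply] using this
    rw [← hp]
    simp [Matrix.mulVec, dotProduct, Matrix.map_apply]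
  have hker := ker_bound hn B hBs hBd
  rw [← hWmap] at hker
  exact det_dvd_of_ker W (n / 2) (by omega) hker
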